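/- Fix s ≥ 4 and let τ : (Fin s → ℤ) → ℂ be a solution of the octahedral relation, i.e. for every n : Fin s → ℤ with Σᵢ nᵢ = −2 and all indices α < β < γ < δ in Fin s: τ(n + e^α + e^β)·τ(n + e^γ + e^δ) − τ(n + e^α + e^γ)·τ(n + e^β + e^δ) + τ(n + e^α + e^δ)·τ(n + e^β + e^γ) = 0. Let σ be the transposition of two adjacent indices i and i+1 in Fin s. Then the function τ'(n) = (−1)^{n_i·n_{i+1}}·τ(σ(n)), where σ(n) is obtained from n by swapping the entries in positions i and i+1, is again a solution of the octahedral relation. -/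
import Mathlib


open Finset

lemma comp_swap_single {s : ℕ} (i j a : Fin s) (f : Fin s → ℤ) :
    (f + Pi.single a 1) ∘ ⇑(Equiv.swap i j) =
      f ∘ ⇑(Equiv.swap i j) + Pi.single (Equiv.swap i j a) 1 := by
  funext x
  simp only [Function.comp_apply, Pi.add_apply]
  congr 1
  simp [Pi.single_apply, Equiv.swap_apply_eq_iff]

lemma sign_key (a b : ℤ) :
    ((-1:ℂ))^((a+1)*(b+1)) * (-1:ℂ)^(a*b) =
      -(((-1:ℂ))^((a+1)*b) * (-1:ℂ)^(a*(b+1))) := by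
  rw [← zpow_add₀ (by norm_num : (-1:ℂ) ≠ 0), ← zpow_add₀ (by norm_num : (-1:ℂ) ≠ 0)]
  have h : (a+1)*(b+1) + a*b = ((a+1)*b + a*(b+1)) + 1 := by ring
  rw [h, zpow_add₀ (by norm_num : (-1:ℂ) ≠ 0), zpow_one]
  ring

/-- The octahedral (discrete Hirota) relation for a discrete tau function
`τ : (Fin s → ℤ) → ℂ`: for every `n` of degree `−2` and all indices
`α < β < γ < δ`,
`τ(n+e^α+e^β) τ(n+e^γ+e^δ) − τ(n+e^α+e^γ) τ(n+e^β+e^δ)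
  + τ(n+e^α+e^δ) τ(n+e^β+e^γ) = 0`. -/
def OctahedralRelation {s : ℕ} (τ : (Fin s → ℤ) → ℂ) : Prop :=
  ∀ n : Fin s → ℤ, (∑ i, n i) = -2 →
    ∀ α β γ δ : Fin s, α < β → β < γ → γ < δ →
      τ (n + Pi.single α 1 + Pi.single β 1) * τ (n + Pi.single γ 1 + Pi.single δ 1)
        - τ (n + Pi.single α 1 + Pi.single γ 1) * τ (n + Pi.single β 1 + Pi.single δ 1)
        + τ (n + Pi.single α 1 + Pi.single δ 1) * τ (n + Pi.single β 1 + Pi.single γ 1) = 0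

/-- **Adjacent transpositions act on solutions of the octahedral relation:**
if `τ` satisfies the octahedral relation and `σ` is the transposition of two
adjacent indices `i` and `i+1`, then `τ'(n) = (−1)^{n_i n_{i+1}} τ(σ(n))`,
where `σ(n)` swaps the entries of `n` in positions `i` and `i+1`, also
satisfies the octahedral relation. -/
theorem octahedral_adjacent_transposition_action
    (s : ℕ) (hs : 4 ≤ s) (τ : (Fin s → ℤ) → ℂ)
    (hτ : OctahedralRelation τ)
    (i : Fin s) (hi : i.val + 1 < s) :
    OctahedralRelation (fun n =>
      (-1 : ℂ) ^ (n i * n ⟨i.val + 1, hi⟩)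
        * τ (n ∘ Equiv.swap i ⟨i.val + 1, hi⟩)) := by
  intro n hn α β γ δ h1 h2 h3
  dsimp only
  set j : Fin s := ⟨i.val + 1, hi⟩ with hjdef
  have hjval : j.val = i.val + 1 := by rw [hjdef]
  have hm : ∑ x, (n ∘ ⇑(Equiv.swap i j)) x = -2 :=
    (Equiv.sum_comp (Equiv.swap i j) n).trans hn
  have hij : i < j := by rw [Fin.lt_def, hjval]; omega
  have keyA : ∀ x : Fin s, i < x → x ≠ j → j < x := by
    intro x hx hxj
    have ha : i.val < x.val := Fin.lt_def.mp hx
    have hb : x.val ≠ j.val := fun h => hxj (Fin.ext h)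
    exact Fin.lt_def.mpr (by omega)
  have keyB : ∀ x : Fin s, x < j → x ≠ i → x < i := by
    intro x hx hxi
    have ha : x.val < j.val := Fin.lt_def.mp hx
    have hb : x.val ≠ i.val := fun h => hxi (Fin.ext h)
    exact Fin.lt_def.mpr (by omega)
  simp only [comp_swap_single]
  rcases eq_or_ne i α with rfl | hiα
  · -- α = i
    rcases eq_or_ne j β with rfl | hjβne
    · -- Case 3: (α,β) = (i,j)
      have hγi : γ ≠ i := (lt_trans hij h2).ne'
      have hδi : δ ≠ i := (lt_trans hij (lt_trans h2 h3)).ne'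
      have hγj : γ ≠ j := h2.ne'
      have hδj : δ ≠ j := (lt_trans h2 h3).ne'
      rw [Equiv.swap_apply_left, Equiv.swap_apply_right,
        Equiv.swap_apply_of_ne_of_ne hγi hγj,
        Equiv.swap_apply_of_ne_of_ne hδi hδj]
      rw [add_right_comm (n ∘ ⇑(Equiv.swap i j)) (Pi.single j 1) (Pi.single i 1)]
      simp [Pi.single_apply, Ne.symm hγi, Ne.symm hδi, Ne.symm hγj, Ne.symm hδj,
        hij.ne, hij.ne']
      linear_combination
        (τ ((n ∘ ⇑(Equiv.swap i j)) + Pi.single i 1 + Pi.single j 1) *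
          τ ((n ∘ ⇑(Equiv.swap i j)) + Pi.single γ 1 + Pi.single δ 1)) *
          sign_key (n i) (n j)
        + (-((-1:ℂ)^((n i + 1) * n j) * (-1:ℂ)^(n i * (n j + 1)))) *
          hτ (n ∘ ⇑(Equiv.swap i j)) hm i j γ δ hij h2 h3
    · have hβj : β ≠ j := hjβne.symm
      -- Case 2: α = i, j not among indices
      have hjβ : j < β := keyA β h1 hβj
      have hβi : β ≠ i := h1.ne'
      have hγi : γ ≠ i := (lt_trans h1 h2).ne'
      have hδi : δ ≠ i := (lt_trans h1 (lt_trans h2 h3)).ne'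
      have hγj : γ ≠ j := (lt_trans hjβ h2).ne'
      have hδj : δ ≠ j := (lt_trans hjβ (lt_trans h2 h3)).ne'
      rw [Equiv.swap_apply_left,
        Equiv.swap_apply_of_ne_of_ne hβi hβj,
        Equiv.swap_apply_of_ne_of_ne hγi hγj,
        Equiv.swap_apply_of_ne_of_ne hδi hδj]
      simp [Pi.single_apply, Ne.symm hβi, Ne.symm hγi, Ne.symm hδi,
        Ne.symm hβj, Ne.symm hγj, Ne.symm hδj, hij.ne, hij.ne']
      linear_combination ((-1:ℂ)^((n i + 1) * n j) * (-1:ℂ)^(n i * n j)) *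
        hτ (n ∘ ⇑(Equiv.swap i j)) hm j β γ δ hjβ h2 h3
  · have hαi : α ≠ i := hiα.symm
    rcases eq_or_ne i β with rfl | hiβ
    · -- β = i
      have hαj : α ≠ j := (lt_trans h1 hij).ne
      rcases eq_or_ne j γ with rfl | hjγne
      · -- Case 5: (β,γ) = (i,j)
        have hαi : α ≠ i := h1.ne
        have hδi : δ ≠ i := (lt_trans hij h3).ne'
        have hδj : δ ≠ j := h3.ne'
        rw [Equiv.swap_apply_left, Equiv.swap_apply_right,
          Equiv.swap_apply_of_ne_of_ne hαi hαj,
          Equiv.swap_apply_of_ne_of_ne hδi hδj]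
        rw [add_right_comm (n ∘ ⇑(Equiv.swap i j)) (Pi.single j 1) (Pi.single i 1)]
        simp [Pi.single_apply, Ne.symm hαi, Ne.symm hδi, Ne.symm hαj, Ne.symm hδj,
          hij.ne, hij.ne']
        linear_combination
          (τ ((n ∘ ⇑(Equiv.swap i j)) + Pi.single α 1 + Pi.single δ 1) *
            τ ((n ∘ ⇑(Equiv.swap i j)) + Pi.single i 1 + Pi.single j 1)) *
            sign_key (n i) (n j)
          + (-((-1:ℂ)^((n i + 1) * n j) * (-1:ℂ)^(n i * (n j + 1)))) *
            hτ (n ∘ ⇑(Equiv.swap i j)) hm α i j δ h1 hij h3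
      · have hγj : γ ≠ j := hjγne.symm
        -- Case 4: β = i, j not among indices
        have hjγ : j < γ := keyA γ h2 hγj
        have hαi : α ≠ i := h1.ne
        have hγi : γ ≠ i := h2.ne'
        have hδi : δ ≠ i := (lt_trans h2 h3).ne'
        have hδj : δ ≠ j := (lt_trans hjγ h3).ne'
        rw [Equiv.swap_apply_left,
          Equiv.swap_apply_of_ne_of_ne hαi hαj,
          Equiv.swap_apply_of_ne_of_ne hγi hγj,
          Equiv.swap_apply_of_ne_of_ne hδi hδj]
        simp [Pi.single_apply, Ne.symm hαi, Ne.symm hγi, Ne.symm hδi,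
          Ne.symm hαj, Ne.symm hγj, Ne.symm hδj, hij.ne, hij.ne']
        linear_combination ((-1:ℂ)^((n i + 1) * n j) * (-1:ℂ)^(n i * n j)) *
          hτ (n ∘ ⇑(Equiv.swap i j)) hm α j γ δ (lt_trans h1 hij) hjγ h3
    · have hβi : β ≠ i := hiβ.symm
      rcases eq_or_ne i γ with rfl | hiγ
      · -- γ = i
        have hαj : α ≠ j := (lt_trans (lt_trans h1 h2) hij).ne
        have hβj : β ≠ j := (lt_trans h2 hij).ne
        have hαi : α ≠ i := (lt_trans h1 h2).ne
        rcases eq_or_ne j δ with rfl | hjδne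
        · -- Case 7: (γ,δ) = (i,j)
          rw [Equiv.swap_apply_left, Equiv.swap_apply_right,
            Equiv.swap_apply_of_ne_of_ne hαi hαj,
            Equiv.swap_apply_of_ne_of_ne hβi hβj]
          rw [add_right_comm (n ∘ ⇑(Equiv.swap i j)) (Pi.single j 1) (Pi.single i 1)]
          simp [Pi.single_apply, Ne.symm hαi, Ne.symm hβi, Ne.symm hαj, Ne.symm hβj,
            hij.ne, hij.ne']
          linear_combination
            (τ ((n ∘ ⇑(Equiv.swap i j)) + Pi.single α 1 + Pi.single β 1) *
              τ ((n ∘ ⇑(Equiv.swap i j)) + Pi.single i 1 + Pi.single j 1)) *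
              sign_key (n i) (n j)
            + (-((-1:ℂ)^((n i + 1) * n j) * (-1:ℂ)^(n i * (n j + 1)))) *
              hτ (n ∘ ⇑(Equiv.swap i j)) hm α β i j h1 h2 hij
        · have hδj : δ ≠ j := hjδne.symm
          -- Case 6: γ = i, j not among indices
          have hjδ : j < δ := keyA δ h3 hδj
          have hδi : δ ≠ i := h3.ne'
          rw [Equiv.swap_apply_left,
            Equiv.swap_apply_of_ne_of_ne hαi hαj,
            Equiv.swap_apply_of_ne_of_ne hβi hβj,
            Equiv.swap_apply_of_ne_of_ne hδi hδj]
          simp [Pi.single_apply, Ne.symm hαi, Ne.symm hβi, Ne.symm hδi,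
            Ne.symm hαj, Ne.symm hβj, Ne.symm hδj, hij.ne, hij.ne']
          linear_combination ((-1:ℂ)^((n i + 1) * n j) * (-1:ℂ)^(n i * n j)) *
            hτ (n ∘ ⇑(Equiv.swap i j)) hm α β j δ h1 (lt_trans h2 hij) hjδ
      · have hγi : γ ≠ i := hiγ.symm
        rcases eq_or_ne i δ with rfl | hiδ
        · -- Case 8: δ = i (then j is not among indices)
          have hαi : α ≠ i := (lt_trans h1 (lt_trans h2 h3)).ne
          have hβi' : β ≠ i := (lt_trans h2 h3).ne
          have hγi' : γ ≠ i := h3.ne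
          have hαj : α ≠ j := (lt_trans (lt_trans h1 (lt_trans h2 h3)) hij).ne
          have hβj : β ≠ j := (lt_trans (lt_trans h2 h3) hij).ne
          have hγj : γ ≠ j := (lt_trans h3 hij).ne
          rw [Equiv.swap_apply_left,
            Equiv.swap_apply_of_ne_of_ne hαi hαj,
            Equiv.swap_apply_of_ne_of_ne hβi' hβj,
            Equiv.swap_apply_of_ne_of_ne hγi' hγj]
          simp [Pi.single_apply, Ne.symm hαi, Ne.symm hβi', Ne.symm hγi',
            Ne.symm hαj, Ne.symm hβj, Ne.symm hγj, hij.ne, hij.ne']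
          linear_combination ((-1:ℂ)^((n i + 1) * n j) * (-1:ℂ)^(n i * n j)) *
            hτ (n ∘ ⇑(Equiv.swap i j)) hm α β γ j h1 h2 (lt_trans h3 hij)
        · have hδi : δ ≠ i := hiδ.symm
          -- none of the indices equals i
          rcases eq_or_ne j α with rfl | hjαne
          · -- Case 9: α = j
            have hβj : β ≠ j := h1.ne'
            have hγj : γ ≠ j := (lt_trans h1 h2).ne'
            have hδj : δ ≠ j := (lt_trans h1 (lt_trans h2 h3)).ne'
            rw [Equiv.swap_apply_right,
              Equiv.swap_apply_of_ne_of_ne hβi hβj,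
              Equiv.swap_apply_of_ne_of_ne hγi hγj,
              Equiv.swap_apply_of_ne_of_ne hδi hδj]
            simp [Pi.single_apply, Ne.symm hβi, Ne.symm hγi, Ne.symm hδi,
              Ne.symm hβj, Ne.symm hγj, Ne.symm hδj, hij.ne, hij.ne']
            linear_combination ((-1:ℂ)^(n i * (n j + 1)) * (-1:ℂ)^(n i * n j)) *
              hτ (n ∘ ⇑(Equiv.swap i j)) hm i β γ δ (lt_trans hij h1) h2 h3
          · have hαj : α ≠ j := hjαne.symm
            rcases eq_or_ne j β with rfl | hjβne
            · -- Case 10: β = j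
              have hαi' : α < i := keyB α h1 hαi
              have hγj : γ ≠ j := h2.ne'
              have hδj : δ ≠ j := (lt_trans h2 h3).ne'
              rw [Equiv.swap_apply_right,
                Equiv.swap_apply_of_ne_of_ne hαi hαj,
                Equiv.swap_apply_of_ne_of_ne hγi hγj,
                Equiv.swap_apply_of_ne_of_ne hδi hδj]
              simp [Pi.single_apply, Ne.symm hαi, Ne.symm hγi, Ne.symm hδi,
                Ne.symm hαj, Ne.symm hγj, Ne.symm hδj, hij.ne, hij.ne']
              linear_combination ((-1:ℂ)^(n i * (n j + 1)) * (-1:ℂ)^(n i * n j)) *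
                hτ (n ∘ ⇑(Equiv.swap i j)) hm α i γ δ hαi' (lt_trans hij h2) h3
            · have hβj : β ≠ j := hjβne.symm
              rcases eq_or_ne j γ with rfl | hjγne
              · -- Case 11: γ = j
                have hβi' : β < i := keyB β h2 hβi
                have hδj : δ ≠ j := h3.ne'
                rw [Equiv.swap_apply_right,
                  Equiv.swap_apply_of_ne_of_ne hαi hαj,
                  Equiv.swap_apply_of_ne_of_ne hβi hβj,
                  Equiv.swap_apply_of_ne_of_ne hδi hδj]
                simp [Pi.single_apply, Ne.symm hαi, Ne.symm hβi, Ne.symm hδi,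
                  Ne.symm hαj, Ne.symm hβj, Ne.symm hδj, hij.ne, hij.ne']
                linear_combination ((-1:ℂ)^(n i * (n j + 1)) * (-1:ℂ)^(n i * n j)) *
                  hτ (n ∘ ⇑(Equiv.swap i j)) hm α β i δ h1 hβi' (lt_trans hij h3)
              · have hγj : γ ≠ j := hjγne.symm
                rcases eq_or_ne j δ with rfl | hjδne
                · -- Case 12: δ = j
                  have hγi' : γ < i := keyB γ h3 hγi
                  rw [Equiv.swap_apply_right,
                    Equiv.swap_apply_of_ne_of_ne hαi hαj,
                    Equiv.swap_apply_of_ne_of_ne hβi hβj,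
                    Equiv.swap_apply_of_ne_of_ne hγi hγj]
                  simp [Pi.single_apply, Ne.symm hαi, Ne.symm hβi, Ne.symm hγi,
                    Ne.symm hαj, Ne.symm hβj, Ne.symm hγj, hij.ne, hij.ne']
                  linear_combination ((-1:ℂ)^(n i * (n j + 1)) * (-1:ℂ)^(n i * n j)) *
                    hτ (n ∘ ⇑(Equiv.swap i j)) hm α β γ i h1 h2 hγi'
                · have hδj : δ ≠ j := hjδne.symm
                  -- Case 1: generic, i and j not among indices
                  rw [Equiv.swap_apply_of_ne_of_ne hαi hαj,
                    Equiv.swap_apply_of_ne_of_ne hβi hβj,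
                    Equiv.swap_apply_of_ne_of_ne hγi hγj,
                    Equiv.swap_apply_of_ne_of_ne hδi hδj]
                  simp [Pi.single_apply, Ne.symm hαi, Ne.symm hβi, Ne.symm hγi,
                    Ne.symm hδi, Ne.symm hαj, Ne.symm hβj, Ne.symm hγj, Ne.symm hδj]
                  linear_combination ((-1:ℂ)^(n i * n j) * (-1:ℂ)^(n i * n j)) *
                    hτ (n ∘ ⇑(Equiv.swap i j)) hm α β γ δ h1 h2 h3
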